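/- Let M ≥ 1 and let S_0 ≥ S_1 ≥ ⋯ ≥ S_M be nonnegative real numbers with S_0 > 0 and S_M = 0, let M′ = min{1 ≤ j ≤ M : S_j = 0}, and use the convention 0/0 = 0. Then Σ_{j=1}^{M} (√S_{j−1} − √S_j)² / (S_{j−1} − S_j) ≤ 1 + Σ_{j=1}^{M′−1} (S_{j−1} − S_j)/(4 S_j). -/

import Mathlib

lemma key_ineq (a b : ℝ) (hb : 0 < b) (hba : b ≤ a) :
    (Real.sqrt a - Real.sqrt b) ^ 2 / (a - b) ≤ (a - b) / (4 * b) := by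
  rcases eq_or_lt_of_le hba with h | h
  · simp [← h]
  · set sa := Real.sqrt a with hsa
    set sb := Real.sqrt b with hsb
    have ha : 0 < a := lt_trans hb h
    have hsb0 : 0 < sb := Real.sqrt_pos.mpr hb
    have hsa0 : 0 < sa := Real.sqrt_pos.mpr ha
    have hlt : sb < sa := Real.sqrt_lt_sqrt hb.le h
    have hb2 : sb ^ 2 = b := Real.sq_sqrt hb.le
    have ha2 : sa ^ 2 = a := Real.sq_sqrt ha.le
    have hab : a - b = (sa - sb) * (sa + sb) := by
      rw [← ha2, ← hb2]; ring
    have h1 : (sa - sb) ^ 2 / (a - b) = (sa - sb) / (sa + sb) := by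
      rw [hab, pow_two, mul_div_mul_left _ _ (by linarith : sa - sb ≠ 0)]
    rw [h1, div_le_div_iff₀ (by linarith) (by linarith)]
    rw [hab, ← hb2]
    nlinarith [sq_nonneg (sa - sb), sq_nonneg (sa + sb)]

/-- Let `M ≥ 1` and let `S 0 ≥ S 1 ≥ ⋯ ≥ S M` be nonnegative reals with
`S 0 > 0` and `S M = 0`, let `M'` be the least index `1 ≤ j ≤ M` with `S j = 0`, and use the
convention `0/0 = 0` (automatic for Lean's real division).  Then
`∑_{j=1}^{M} (√(S (j−1)) − √(S j))² / (S (j−1) − S j)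
  ≤ 1 + ∑_{j=1}^{M'−1} (S (j−1) − S j)/(4 S j)`. -/
theorem stmt_1 (M : ℕ) (hM : 1 ≤ M) (S : ℕ → ℝ)
    (hnonneg : ∀ j, j ≤ M → 0 ≤ S j)
    (hmono : ∀ j, j < M → S (j + 1) ≤ S j)
    (hS0 : 0 < S 0) (hSM : S M = 0)
    (M' : ℕ) (hM'1 : 1 ≤ M') (hM'M : M' ≤ M) (hM'zero : S M' = 0)
    (hM'least : ∀ j, 1 ≤ j → j < M' → S j ≠ 0) :
    ∑ j ∈ Finset.Icc 1 M,
        (Real.sqrt (S (j - 1)) - Real.sqrt (S j)) ^ 2 / (S (j - 1) - S j)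
      ≤ 1 + ∑ j ∈ Finset.Icc 1 (M' - 1), (S (j - 1) - S j) / (4 * S j) := by
  have hanti : ∀ i j : ℕ, i ≤ j → j ≤ M → S j ≤ S i := by
    intro i j hij hjM
    induction j with
    | zero => obtain rfl := Nat.le_zero.mp hij; exact le_rfl
    | succ n ih =>
      rcases Nat.eq_or_lt_of_le hij with h | h
      · rw [h]
      · exact le_trans (hmono n (by omega)) (ih (by omega) (by omega))
  have hzero : ∀ j, M' ≤ j → j ≤ M → S j = 0 := fun j h1 h2 =>
    le_antisymm (hM'zero ▸ hanti M' j h1 h2) (hnonneg j h2)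
  have hpos : ∀ j, j < M' → 0 < S j := by
    intro j hj
    rcases Nat.eq_zero_or_pos j with rfl | h
    · exact hS0
    · exact lt_of_le_of_ne (hnonneg j (by omega)) (Ne.symm (hM'least j h hj))
  have hdisj : Disjoint (Finset.Icc 1 (M' - 1)) (Finset.Icc M' M) := by
    rw [Finset.disjoint_left]
    intro x hx hx'
    simp only [Finset.mem_Icc] at hx hx'
    omega
  have hsplit : Finset.Icc 1 M = Finset.Icc 1 (M' - 1) ∪ Finset.Icc M' M := by
    ext x
    simp only [Finset.mem_Icc, Finset.mem_union]
    omega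
  rw [hsplit, Finset.sum_union hdisj]
  have htail : ∑ j ∈ Finset.Icc M' M,
      (Real.sqrt (S (j - 1)) - Real.sqrt (S j)) ^ 2 / (S (j - 1) - S j) = 1 := by
    rw [Finset.sum_eq_single_of_mem M' (Finset.mem_Icc.mpr ⟨le_rfl, hM'M⟩)]
    · have hp : 0 < S (M' - 1) := hpos (M' - 1) (by omega)
      rw [hM'zero, Real.sqrt_zero, sub_zero, sub_zero, Real.sq_sqrt hp.le,
        div_self hp.ne']
    · intro j hj hne
      simp only [Finset.mem_Icc] at hj
      rw [hzero j hj.1 hj.2, hzero (j - 1) (by omega) (by omega)]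
      simp
  rw [htail, add_comm]
  refine add_le_add_right (Finset.sum_le_sum ?_) 1
  intro j hj
  simp only [Finset.mem_Icc] at hj
  have hjM' : j < M' := by omega
  have hbpos : 0 < S j := hpos j hjM'
  have hle : S j ≤ S (j - 1) := by
    have := hmono (j - 1) (by omega)
    rwa [Nat.sub_add_cancel hj.1] at this
  exact key_ineq _ _ hbpos hle
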